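/- Let $\widetilde N(\cdot)$ be a counting process on $[0,\tau]$ whose conditional rate given $\bm Z$ satisfies $\operatorname{E}\{d\widetilde N(t)\mid \bm Z\} = f(t, \bm\beta_0^\intercal \bm Z)\, g(\bm\gamma_0^\intercal \bm Z)\,dt$ with $\int_0^\tau f(t,x)\,dt = 1$ for all $x$, and let $C \le \tau$ be a censoring time independent of $\widetilde N(\cdot)$ given $\bm Z$, with $F(C, \bm\beta_0^\intercal \bm Z) > 0$ almost surely, where $F(t,x) = \int_0^t f(u,x)\,du$. Then with $N(t) = \widetilde N(\min(t,C))$, one has $\operatorname{E}\big\{ N(C)/F(C, \bm\beta_0^\intercal \bm Z) \,\big|\, \bm Z \big\} = g(\bm\gamma_0^\intercal \bm Z) = \operatorname{E}\{\widetilde N(\tau)\mid\bm Z\}$. -/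

import Mathlib

open MeasureTheory Matrix Filter Topology

/-- Auxiliary: the σ-algebra generated by a map. -/
def stmt5.gen {Ω α : Type*} [MeasurableSpace α] (X : Ω → α) : MeasurableSpace Ω :=
  MeasurableSpace.comap X inferInstance

/-- **Equation (10).** Let `Ñ` be a counting process on `[0,τ]` with jump times
`T ω ⊆ [0,τ]` (finitely many), whose conditional rate given `Z` is
`f(t, β₀ᵀZ) g(γ₀ᵀZ) dt` with `∫_0^τ f(t,x) dt = 1`, `f ≥ 0` and `g > 0`, and let `C ≤ τ` be a
censoring time conditionally independent of `Ñ` given `Z` (expressed by the conditional rate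
of the censored process given `(Z,C)`), with `F(C, β₀ᵀZ) > 0` a.s. where
`F(t,x) = ∫_0^t f(u,x) du`.  Then, with `N(t) = Ñ(min(t,C))`,
`E{ N(C)/F(C, β₀ᵀZ) ∣ Z } = g(γ₀ᵀZ) = E{Ñ(τ) ∣ Z}` a.s. -/
theorem stmt5
    {Ω : Type*} [MeasurableSpace Ω] (P : Measure Ω) [IsProbabilityMeasure P]
    (p : ℕ) (Z : Ω → Fin p → ℝ) (hZ : Measurable Z)
    (τ : ℝ) (hτ : 0 < τ)
    (C : Ω → ℝ) (hC : Measurable C) (hCτ : ∀ ω, C ω ∈ Set.Icc 0 τ)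
    (T : Ω → Finset ℝ) (hT : ∀ ω, ∀ s ∈ T ω, s ∈ Set.Icc 0 τ)
    (hbdd : ∃ B : ℕ, ∀ ω, (T ω).card ≤ B)
    (β₀ γ₀ : Fin p → ℝ)
    (f : ℝ → ℝ → ℝ) (hf_nonneg : ∀ t x, 0 ≤ f t x)
    (hf_norm : ∀ x, (∫ t in (0:ℝ)..τ, f t x) = 1)
    (g : ℝ → ℝ) (hg_pos : ∀ x, 0 < g x)
    (F : ℝ → ℝ → ℝ) (hF : ∀ t x, F t x = ∫ u in (0:ℝ)..t, f u x)
    (hFC_pos : ∀ᵐ ω ∂P, 0 < F (C ω) (β₀ ⬝ᵥ Z ω))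
    -- conditional rate of `Ñ` given `Z`:  E{dÑ(t) ∣ Z} = f(t,β₀ᵀZ) g(γ₀ᵀZ) dt
    (hrate : ∀ φ : ℝ → ℝ, Measurable φ → (∃ M, ∀ x, |φ x| ≤ M) →
      P[(fun ω => (T ω).sum φ) | MeasurableSpace.comap Z inferInstance]
        =ᵐ[P] fun ω => ∫ t in (0:ℝ)..τ, φ t * (f t (β₀ ⬝ᵥ Z ω) * g (γ₀ ⬝ᵥ Z ω)))
    -- conditional independence of `C` and `Ñ` given `Z`:
    -- E{dÑ(t) ∣ Z, C} = f(t,β₀ᵀZ) g(γ₀ᵀZ) dt on {t ≤ C}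
    (hcondind : ∀ φ : ℝ → ℝ, Measurable φ → (∃ M, ∀ x, |φ x| ≤ M) →
      P[(fun ω => ((T ω).filter (fun s => s ≤ C ω)).sum φ) |
          MeasurableSpace.comap (fun ω => (Z ω, C ω)) inferInstance]
        =ᵐ[P] fun ω => ∫ t in (0:ℝ)..(C ω), φ t * (f t (β₀ ⬝ᵥ Z ω) * g (γ₀ ⬝ᵥ Z ω))) :
    P[(fun ω => (((T ω).filter (fun s => s ≤ C ω)).card : ℝ) / F (C ω) (β₀ ⬝ᵥ Z ω)) |
        MeasurableSpace.comap Z inferInstance]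
      =ᵐ[P] (fun ω => g (γ₀ ⬝ᵥ Z ω)) ∧
    P[(fun ω => ((T ω).card : ℝ)) | MeasurableSpace.comap Z inferInstance]
      =ᵐ[P] (fun ω => g (γ₀ ⬝ᵥ Z ω)) := by
  classical
  have hmZ : MeasurableSpace.comap Z inferInstance ≤ ‹MeasurableSpace Ω› := hZ.comap_le
  have hmZC : MeasurableSpace.comap (fun ω => (Z ω, C ω)) inferInstance ≤ ‹MeasurableSpace Ω› :=
    (hZ.prodMk hC).comap_le
  have hZle : stmt5.gen Z ≤ stmt5.gen (fun ω => (Z ω, C ω)) := by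
    unfold stmt5.gen
    have h : Z = Prod.fst ∘ (fun ω => (Z ω, C ω)) := rfl
    rw [h, ← MeasurableSpace.comap_comp]
    exact MeasurableSpace.comap_mono measurable_fst.comap_le
  -- abbreviations
  set V : Ω → ℝ := fun ω => g (γ₀ ⬝ᵥ Z ω) with hVdef
  set NC : Ω → ℝ := fun ω => (((T ω).filter (fun s => s ≤ C ω)).card : ℝ) with hNCdef
  set Fc : Ω → ℝ := fun ω => F (C ω) (β₀ ⬝ᵥ Z ω) with hFcdef
  set W : Ω → ℝ := fun ω => Fc ω * V ω with hWdef
  -- Step 1: second conclusion, from `hrate` applied to `φ = 1`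
  have hone : ∃ M, ∀ x : ℝ, |(fun _ : ℝ => (1:ℝ)) x| ≤ M := ⟨1, fun x => by simp⟩
  have hrate1 := hrate (fun _ => 1) measurable_const hone
  have hsum1 : (fun ω => (T ω).sum (fun _ => (1:ℝ))) = fun ω => ((T ω).card : ℝ) := by
    funext ω; simp
  rw [hsum1] at hrate1
  have hRHS1 : (fun ω => ∫ t in (0:ℝ)..τ, (fun _ : ℝ => (1:ℝ)) t *
      (f t (β₀ ⬝ᵥ Z ω) * g (γ₀ ⬝ᵥ Z ω))) = V := by
    funext ω
    simp only [one_mul, hVdef]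
    rw [intervalIntegral.integral_mul_const, hf_norm, one_mul]
  rw [hRHS1] at hrate1
  have hconcl2 : P[(fun ω => ((T ω).card : ℝ)) | stmt5.gen Z] =ᵐ[P] V := hrate1
  -- properties of V
  have hV_int : Integrable V P := integrable_condExp.congr hconcl2
  have hV_meas' : AEStronglyMeasurable[stmt5.gen Z] V P :=
    ⟨P[(fun ω => ((T ω).card : ℝ)) | stmt5.gen Z], stronglyMeasurable_condExp, hconcl2.symm⟩
  obtain ⟨V', hV'sm, hVV'⟩ := id hV_meas'
  have hV'm : Measurable[(stmt5.gen (fun ω => (Z ω, C ω)))] V' := (hV'sm.measurable).mono hZle le_rfl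
  -- Step 2: conditional expectation of NC given (Z, C), from `hcondind` with `φ = 1`
  have hci := hcondind (fun _ => 1) measurable_const hone
  have hsum2 : (fun ω => ((T ω).filter (fun s => s ≤ C ω)).sum (fun _ => (1:ℝ))) = NC := by
    funext ω; simp [hNCdef]
  rw [hsum2] at hci
  have hRHS2 : (fun ω => ∫ t in (0:ℝ)..(C ω), (fun _ : ℝ => (1:ℝ)) t *
      (f t (β₀ ⬝ᵥ Z ω) * g (γ₀ ⬝ᵥ Z ω))) = W := by
    funext ω
    simp only [one_mul, hWdef, hFcdef, hVdef]
    rw [intervalIntegral.integral_mul_const, hF]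
  rw [hRHS2] at hci
  replace hci : P[NC | stmt5.gen (fun ω => (Z ω, C ω))] =ᵐ[P] W := hci
  -- NC is integrable
  have hNC_int : Integrable NC P := by
    by_contra hni
    rw [condExp_of_not_integrable hni] at hci
    obtain ⟨ω, h0, hpos⟩ := (hci.and hFC_pos).exists
    have hWpos : (0:ℝ) < W ω := mul_pos hpos (hg_pos _)
    rw [← h0] at hWpos
    exact lt_irrefl _ hWpos
  have hW_int : Integrable W P := integrable_condExp.congr hci
  obtain ⟨W', hW'sm, hWW'⟩ : AEStronglyMeasurable[stmt5.gen (fun ω => (Z ω, C ω))] W P :=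
    ⟨P[NC | (stmt5.gen (fun ω => (Z ω, C ω)))], stronglyMeasurable_condExp, hci.symm⟩
  have hW'm : Measurable[(stmt5.gen (fun ω => (Z ω, C ω)))] W' := hW'sm.measurable
  -- measurable version of Fc
  set Fc' : Ω → ℝ := fun ω => W' ω / V' ω with hFc'def
  have hFc'm : Measurable[(stmt5.gen (fun ω => (Z ω, C ω)))] Fc' := hW'm.div hV'm
  have hFcFc' : Fc =ᵐ[P] Fc' := by
    filter_upwards [hVV', hWW'] with ω h1 h2
    have hg0 : V ω ≠ 0 := (hg_pos _).ne'
    simp only [hFc'def, ← h1, ← h2, hWdef]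
    rw [mul_div_assoc, div_self hg0, mul_one]
  -- the a.e. good set
  have hgood : ∀ᵐ ω ∂P, 0 < Fc ω ∧ Fc ω = Fc' ω ∧ V ω = V' ω ∧ W ω = W' ω := by
    filter_upwards [hFC_pos, hFcFc', hVV', hWW'] with ω h1 h2 h3 h4
    exact ⟨h1, h2, h3, h4⟩
  -- truncations
  set u : ℕ → Ω → ℝ := fun n ω => max 0 (min (Fc' ω)⁻¹ n) with hudef
  have hum : ∀ n, Measurable[(stmt5.gen (fun ω => (Z ω, C ω)))] (u n) := fun n =>
    measurable_const.max ((hFc'm.inv).min measurable_const)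
  have husm : ∀ n, StronglyMeasurable[(stmt5.gen (fun ω => (Z ω, C ω)))] (u n) := fun n => (hum n).stronglyMeasurable
  have hu_nonneg : ∀ n ω, 0 ≤ u n ω := fun n ω => le_max_left _ _
  have hu_le : ∀ n ω, u n ω ≤ n := fun n ω =>
    max_le (Nat.cast_nonneg n) (min_le_right _ _)
  have hu_mono : ∀ ω, Monotone fun n => u n ω := fun ω m n hmn =>
    max_le_max le_rfl (min_le_min le_rfl (Nat.cast_le.2 hmn))
  have hu_tendsto : ∀ ω, 0 < Fc' ω → Tendsto (fun n => u n ω) atTop (𝓝 (Fc' ω)⁻¹) := by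
    intro ω hpos
    have h1 : (fun n : ℕ => u n ω) =ᶠ[atTop] (fun _ => (Fc' ω)⁻¹) := by
      obtain ⟨n₀, hn₀⟩ := exists_nat_ge (Fc' ω)⁻¹
      filter_upwards [eventually_ge_atTop n₀] with n hn
      simp only [hudef]
      rw [min_eq_left (hn₀.trans (Nat.cast_le.2 hn)), max_eq_right (inv_nonneg.2 hpos.le)]
    exact Tendsto.congr' h1.symm tendsto_const_nhds
  -- integrability facts
  have hNC_meas : AEStronglyMeasurable NC P := hNC_int.1
  have huamb : ∀ n, AEStronglyMeasurable (u n) P :=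
    fun n => (((hum n).mono hmZC le_rfl).stronglyMeasurable).aestronglyMeasurable
  have hn_int : ∀ n, Integrable (u n * NC) P := fun n =>
    hNC_int.bdd_mul (c := n) (huamb n) (Eventually.of_forall fun ω => by
      rw [Real.norm_eq_abs, abs_of_nonneg (hu_nonneg n ω)]; exact hu_le n ω)
  have hnW_int : ∀ n, Integrable (u n * W) P := fun n =>
    hW_int.bdd_mul (c := n) (huamb n) (Eventually.of_forall fun ω => by
      rw [Real.norm_eq_abs, abs_of_nonneg (hu_nonneg n ω)]; exact hu_le n ω)
  -- pull-out property
  have hpull : ∀ n, P[u n * NC | (stmt5.gen (fun ω => (Z ω, C ω)))] =ᵐ[P] u n * W := by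
    intro n
    refine (condExp_mul_of_stronglyMeasurable_left (husm n) (hn_int n) hNC_int).trans ?_
    filter_upwards [hci] with ω hω
    simp only [Pi.mul_apply, hω]
  -- bound: ‖u n * W‖ ≤ V  a.e.
  have hbound : ∀ n, ∀ᵐ ω ∂P, ‖(u n * W) ω‖ ≤ V ω := by
    intro n
    filter_upwards [hgood] with ω hω
    obtain ⟨hpos, heq, -, -⟩ := hω
    have hpos' : 0 < Fc' ω := heq ▸ hpos
    have h1 : u n ω ≤ (Fc' ω)⁻¹ := max_le (inv_nonneg.2 hpos'.le) (min_le_left _ _)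
    have hWnn : 0 ≤ W ω := le_of_lt (mul_pos hpos (hg_pos _))
    have hval : (Fc' ω)⁻¹ * W ω = V ω := by
      simp only [hWdef, ← heq]
      rw [← mul_assoc, inv_mul_cancel₀ hpos.ne', one_mul]
    rw [Pi.mul_apply, Real.norm_eq_abs, abs_of_nonneg (mul_nonneg (hu_nonneg n ω) hWnn)]
    calc u n ω * W ω ≤ (Fc' ω)⁻¹ * W ω := mul_le_mul_of_nonneg_right h1 hWnn
      _ = V ω := hval
  -- pointwise convergence of u n * W to V
  have htendW : ∀ᵐ ω ∂P, Tendsto (fun n => (u n * W) ω) atTop (𝓝 (V ω)) := by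
    filter_upwards [hgood] with ω hω
    obtain ⟨hpos, heq, -, -⟩ := hω
    have hpos' : 0 < Fc' ω := heq ▸ hpos
    have ht := (hu_tendsto ω hpos').mul_const (W ω)
    have hval : (Fc' ω)⁻¹ * W ω = V ω := by
      simp only [hWdef, ← heq]
      rw [← mul_assoc, inv_mul_cancel₀ hpos.ne', one_mul]
    rw [hval] at ht
    exact ht
  -- the target function
  set h : Ω → ℝ := fun ω => NC ω / Fc ω with hhdef
  -- monotone pointwise convergence of u n * NC to h
  have htendh : ∀ᵐ ω ∂P, Tendsto (fun n => (u n * NC) ω) atTop (𝓝 (h ω)) := by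
    filter_upwards [hgood] with ω hω
    obtain ⟨hpos, heq, -, -⟩ := hω
    have hpos' : 0 < Fc' ω := heq ▸ hpos
    have ht := (hu_tendsto ω hpos').mul_const (NC ω)
    have hval : (Fc' ω)⁻¹ * NC ω = h ω := by
      simp only [hhdef, ← heq]
      rw [div_eq_mul_inv, mul_comm]
    rw [hval] at ht
    exact ht
  have hmono : ∀ᵐ ω ∂P, Monotone fun n => (u n * NC) ω :=
    Eventually.of_forall fun ω m n hmn =>
      mul_le_mul_of_nonneg_right (hu_mono ω hmn) (Nat.cast_nonneg _)
  -- h is a.e. nonneg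
  have hh_nonneg : 0 ≤ᵐ[P] h := by
    filter_upwards [hgood] with ω hω
    obtain ⟨hpos, -, -, -⟩ := hω
    exact div_nonneg (Nat.cast_nonneg _) hpos.le
  -- h is a.e. strongly measurable
  have hh_meas : AEStronglyMeasurable h P := by
    have hmm : AEStronglyMeasurable (fun ω => NC ω / Fc' ω) P :=
      (hNC_meas.aemeasurable.div
        ((hFc'm.mono hmZC le_rfl).aemeasurable)).aestronglyMeasurable
    refine hmm.congr ?_
    filter_upwards [hFcFc'] with ω hω
    simp only [hhdef, hω]
  -- set-integral identity: ∫_s u n * NC = ∫_s u n * W for s ∈ (stmt5.gen (fun ω => (Z ω, C ω)))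
  have hset : ∀ n, ∀ s : Set Ω, MeasurableSet[(stmt5.gen (fun ω => (Z ω, C ω)))] s →
      ∫ ω in s, (u n * NC) ω ∂P = ∫ ω in s, (u n * W) ω ∂P := by
    intro n s hs
    rw [← setIntegral_condExp hmZC (hn_int n) hs]
    exact setIntegral_congr_ae (hmZC s hs) ((hpull n).mono fun ω hω _ => hω)
  -- uniform bound on ∫ u n * NC
  have hInt_le : ∀ n, ∫ ω, (u n * NC) ω ∂P ≤ ∫ ω, V ω ∂P := by
    intro n
    have h1 : ∫ ω, (u n * NC) ω ∂P = ∫ ω, (u n * W) ω ∂P := by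
      have := hset n Set.univ MeasurableSet.univ
      simpa [Measure.restrict_univ] using this
    rw [h1]
    refine integral_mono_ae (hnW_int n) hV_int ?_
    filter_upwards [hbound n] with ω hω
    exact le_trans (le_abs_self _) (by rwa [Real.norm_eq_abs] at hω)
  -- h is integrable (Fatou)
  have hh_int : Integrable h P := by
    refine ⟨hh_meas, ?_⟩
    rw [hasFiniteIntegral_iff_ofReal hh_nonneg]
    have hme : ∀ n, AEMeasurable (fun ω => ENNReal.ofReal ((u n * NC) ω)) P := fun n =>
      ENNReal.measurable_ofReal.comp_aemeasurable
        ((huamb n).aemeasurable.mul hNC_meas.aemeasurable)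
    calc ∫⁻ ω, ENNReal.ofReal (h ω) ∂P
        = ∫⁻ ω, liminf (fun n => ENNReal.ofReal ((u n * NC) ω)) atTop ∂P := by
          refine lintegral_congr_ae ?_
          filter_upwards [htendh] with ω hω
          exact ((ENNReal.continuous_ofReal.tendsto _).comp hω).liminf_eq.symm
      _ ≤ liminf (fun n => ∫⁻ ω, ENNReal.ofReal ((u n * NC) ω) ∂P) atTop :=
          lintegral_liminf_le' hme
      _ ≤ liminf (fun _ : ℕ => ENNReal.ofReal (∫ ω, V ω ∂P)) atTop := by
          refine liminf_le_liminf (Eventually.of_forall fun n => ?_)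
          rw [← ofReal_integral_eq_lintegral_ofReal (hn_int n)
            (Eventually.of_forall fun ω => mul_nonneg (hu_nonneg n ω) (Nat.cast_nonneg _))]
          exact ENNReal.ofReal_le_ofReal (hInt_le n)
      _ = ENNReal.ofReal (∫ ω, V ω ∂P) := liminf_const _
      _ < ⊤ := ENNReal.ofReal_lt_top
  -- set integral equality for s ∈ mZ
  have hg_eq : ∀ s : Set Ω, MeasurableSet[stmt5.gen Z] s → P s < ⊤ →
      ∫ ω in s, V ω ∂P = ∫ ω in s, h ω ∂P := by
    intro s hs _
    have hs' : MeasurableSet[(stmt5.gen (fun ω => (Z ω, C ω)))] s := hZle s hs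
    have hlim1 : Tendsto (fun n => ∫ ω in s, (u n * NC) ω ∂P) atTop
        (𝓝 (∫ ω in s, h ω ∂P)) :=
      integral_tendsto_of_tendsto_of_monotone (fun n => (hn_int n).integrableOn)
        hh_int.integrableOn (ae_restrict_of_ae hmono) (ae_restrict_of_ae htendh)
    have hlim2 : Tendsto (fun n => ∫ ω in s, (u n * W) ω ∂P) atTop
        (𝓝 (∫ ω in s, V ω ∂P)) :=
      tendsto_integral_of_dominated_convergence V
        (fun n => (hnW_int n).aestronglyMeasurable.restrict)
        hV_int.integrableOn (fun n => ae_restrict_of_ae (hbound n))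
        (ae_restrict_of_ae htendW)
    have heqn : (fun n => ∫ ω in s, (u n * NC) ω ∂P)
        = fun n => ∫ ω in s, (u n * W) ω ∂P := funext fun n => hset n s hs'
    rw [heqn] at hlim1
    exact tendsto_nhds_unique hlim2 hlim1
  have hfinal : V =ᵐ[P] P[h | stmt5.gen Z] :=
    ae_eq_condExp_of_forall_setIntegral_eq hmZ hh_int
      (fun s _ _ => hV_int.integrableOn) hg_eq hV_meas'
  exact ⟨hfinal.symm, hconcl2⟩
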